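/- Let G be a graph and W ⊆ V(G). If H is a connected (nonempty) subgraph of G with V(H) ∩ W ≠ ∅, then the subgraph of torso_G(W) induced by V(H) ∩ W is connected. -/

import Mathlib

open SimpleGraph

section Defs

variable {V : Type*} {ι : Type*} {α : Type*}

/-- `G` has no `K_t`-minor: there is no family of `t` pairwise disjoint nonempty connected
vertex sets with an edge of `G` between any two of them. -/
def CliqueMinorFree (G : SimpleGraph V) (t : ℕ) : Prop :=
  ¬ ∃ B : Fin t → Set V,
      (∀ i, (G.induce (B i)).Connected) ∧
      (∀ i j, i ≠ j → Disjoint (B i) (B j)) ∧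
      (∀ i j, i ≠ j → ∃ u ∈ B i, ∃ w ∈ B j, G.Adj u w)

/-- `(T, W)` is a tree decomposition of `G`. -/
structure IsTreeDecomp (G : SimpleGraph V) (T : SimpleGraph ι) (W : ι → Set V) : Prop where
  isTree : T.IsTree
  bagsConnected : ∀ u : V, (T.induce {x : ι | u ∈ W x}).Connected
  edgeInBag : ∀ ⦃u w : V⦄, G.Adj u w → ∃ x, u ∈ W x ∧ w ∈ W x

/-- The tree decomposition with bags `W` has width at most `w`. -/
def TDWidthLE (W : ι → Set V) (w : ℕ) : Prop := ∀ x, (W x).ncard ≤ w + 1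

/-- `φ` is a `p`-centered coloring of `G`: every nonempty connected subgraph on which `φ`
uses at most `p` colors has a vertex of unique color. -/
def IsCenteredColoring (p : ℕ) (G : SimpleGraph V) (φ : V → α) : Prop :=
  ∀ H : G.Subgraph, H.Connected →
    p < (φ '' H.verts).ncard ∨ ∃ u ∈ H.verts, ∀ w ∈ H.verts, w ≠ u → φ w ≠ φ u

/-- The `p`-centered chromatic number of `G`. -/
noncomputable def centeredChromaticNumber (p : ℕ) (G : SimpleGraph V) : ℕ :=
  sInf {k | ∃ φ : V → Fin k, IsCenteredColoring p G φ}

/-- `φ` is a `p`-centered coloring of `(G, σ)`: on every nonempty connected subgraph either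
more than `p` colors are used, or the `σ`-minimal vertex has a unique color. -/
def IsOrderedCenteredColoring (p : ℕ) (G : SimpleGraph V) (σ : V → ℕ) (φ : V → α) : Prop :=
  ∀ H : G.Subgraph, H.Connected →
    p < (φ '' H.verts).ncard ∨
      ∃ u ∈ H.verts, (∀ w ∈ H.verts, σ u ≤ σ w) ∧ ∀ w ∈ H.verts, w ≠ u → φ w ≠ φ u

/-- The `p`-centered chromatic number of `(G, σ)`. -/
noncomputable def orderedCenteredChromaticNumber (p : ℕ) (G : SimpleGraph V) (σ : V → ℕ) : ℕ :=
  sInf {k | ∃ φ : V → Fin k, IsOrderedCenteredColoring p G σ φ}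

/-- `σ` (an injection into `ℕ`, representing a linear ordering of the vertices) is an
elimination ordering of the tree decomposition with bags `W`. -/
def IsEliminationOrdering (W : ι → Set V) (σ : V → ℕ) : Prop :=
  Function.Injective σ ∧
    ∀ u : V, ∃ x : ι, ∀ w : V, (∃ z, u ∈ W z ∧ w ∈ W z) → σ w < σ u → w ∈ W x

/-- `Pa` is a partition of the vertex set into nonempty parts. -/
def IsVertexPartition (Pa : Set (Set V)) : Prop :=
  (∀ P ∈ Pa, P.Nonempty) ∧ ∀ u : V, ∃! P, P ∈ Pa ∧ u ∈ P

/-- The quotient graph `G/Pa`. -/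
def quotientGraph (G : SimpleGraph V) (Pa : Set (Set V)) : SimpleGraph Pa where
  Adj P Q := P ≠ Q ∧ ∃ u ∈ (P : Set V), ∃ w ∈ (Q : Set V), G.Adj u w
  symm := ⟨by
    rintro P Q ⟨hPQ, u, hu, w, hw, hadj⟩
    exact ⟨hPQ.symm, w, hw, u, hu, hadj.symm⟩⟩
  loopless := ⟨by rintro P ⟨h, -⟩; exact h rfl⟩

/-- The neighborhood of a set of vertices. -/
def nbhdSet (G : SimpleGraph V) (S : Set V) : Set V :=
  {w | w ∉ S ∧ ∃ u ∈ S, G.Adj u w}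

/-- `C` is (the vertex set of) a connected component of `G - Z`. -/
def IsCompOfDel (G : SimpleGraph V) (Z C : Set V) : Prop :=
  Disjoint C Z ∧ (G.induce C).Connected ∧
    ∀ u ∈ C, ∀ w, G.Adj u w → w ∉ Z → w ∈ C

/-- The neighborhood of a set of vertices in a subgraph. -/
def subNbhdSet {G : SimpleGraph V} (G₀ : G.Subgraph) (S : Set V) : Set V :=
  {w | w ∉ S ∧ ∃ u ∈ S, G₀.Adj u w}

/-- `C` is (the vertex set of) a connected component of `G₀ - Z`, for a subgraph `G₀`. -/
def IsCompOfSubDel {G : SimpleGraph V} (G₀ : G.Subgraph) (Z C : Set V) : Prop :=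
  C ⊆ G₀.verts \ Z ∧ (G₀.induce C).Connected ∧
    ∀ u ∈ C, ∀ w ∈ G₀.verts \ Z, G₀.Adj u w → w ∈ C

/-- `φ` is a `(p,c)`-good coloring of `G`. -/
def IsGoodColoring (p c : ℕ) (G : SimpleGraph V) (φ : V → ℕ) : Prop :=
  ∀ G₀ : G.Subgraph, ∀ 𝓕 : Set G.Subgraph,
    (∀ F ∈ 𝓕, F ≤ G₀ ∧ F.Connected) →
    ∀ d : ℕ, 0 < d →
      (¬ ∃ f : Fin (d + 1) → G.Subgraph,
          (∀ i, f i ∈ 𝓕) ∧ ∀ i j, i ≠ j → Disjoint (f i).verts (f j).verts) →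
      ∃ Z : Set V, Z ⊆ G₀.verts ∧ ∃ ψ : V → ℕ,
        (∀ u ∈ Z, 1 ≤ ψ u ∧ ψ u ≤ c * d) ∧
        (∀ F ∈ 𝓕, (F.verts ∩ Z).Nonempty) ∧
        (∀ H : G.Subgraph, H ≤ G₀ → H.Connected → (H.verts ∩ Z).Nonempty →
          p < (φ '' H.verts).ncard ∨
            ∃ u ∈ H.verts ∩ Z, ∀ w ∈ H.verts ∩ Z, w ≠ u → (φ w, ψ w) ≠ (φ u, ψ u)) ∧
        (∀ C : Set V, IsCompOfSubDel G₀ Z C →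
          ∃ D₁ D₂ : Set V, ∀ D, IsCompOfSubDel G₀ C D →
            (subNbhdSet G₀ C ∩ D).Nonempty → D = D₁ ∨ D = D₂)

/-- Adjacency in the torso of `W` in `G`: two distinct vertices of `W` joined by a
walk of `G` all of whose internal vertices avoid `W`. -/
def TorsoAdj (G : SimpleGraph V) (W : Set V) (u w : V) : Prop :=
  u ∈ W ∧ w ∈ W ∧ u ≠ w ∧
    ∃ q : G.Walk u w, ∀ x ∈ q.support, x ∈ W → x = u ∨ x = w

/-- The torso of `W` in `G`. -/
def torso (G : SimpleGraph V) (W : Set V) : SimpleGraph W where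
  Adj u w := TorsoAdj G W ↑u ↑w
  symm := ⟨by
    intro u w h
    obtain ⟨hu, hw, hne, q, hq⟩ := h
    exact ⟨hw, hu, hne.symm, q.reverse, fun x hx hxW => by
      rw [Walk.support_reverse, List.mem_reverse] at hx
      exact (hq x hx hxW).symm⟩⟩
  loopless := ⟨by
    intro u h
    exact h.2.2.1 rfl⟩

/-- In the tree `T` rooted at `r`, the vertex `u` is an ancestor of `w`
(i.e. `u` lies on every walk from the root to `w`). -/
def IsAncestor (T : SimpleGraph α) (r u w : α) : Prop :=
  ∀ q : T.Walk r w, u ∈ q.support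

/-- `x` is the lowest common ancestor of `u` and `w` in the tree `T` rooted at `r`. -/
def IsLCA (T : SimpleGraph α) (r x u w : α) : Prop :=
  IsAncestor T r x u ∧ IsAncestor T r x w ∧
    ∀ y, IsAncestor T r y u → IsAncestor T r y w → IsAncestor T r y x

/-- The lowest common ancestor closure of `Y` in the tree `T` rooted at `r`. -/
def lcaClosure (T : SimpleGraph α) (r : α) (Y : Set α) : Set α :=
  {x | ∃ u ∈ Y, ∃ w ∈ Y, IsLCA T r x u w}

/-- The vertex set of `T_{x|y}`: the component of `x` in `T` minus the edge `xy`.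
(For adjacent `x y` in a tree these are the vertices `z` such that
the path from `z` to `y` passes through `x`.) -/
def sideVerts (T : SimpleGraph α) (x y : α) : Set α :=
  {z | ∀ q : T.Walk z y, x ∈ q.support}

/-- The tree decomposition `(T, W)` of `G` is natural. -/
def IsNaturalTD (G : SimpleGraph V) (T : SimpleGraph ι) (W : ι → Set V) : Prop :=
  ∀ x y, T.Adj x y → (G.induce (⋃ z ∈ sideVerts T x y, W z)).Connected

end Defs

lemma torso_reach_aux {V : Type} [DecidableEq V] (G : SimpleGraph V) (W : Set V) (H : G.Subgraph) :
    ∀ n : ℕ, ∀ (u w : V) (hu : u ∈ W) (hw : w ∈ W) (q : G.Walk u w),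
      q.length ≤ n → ∀ hsup : (∀ x ∈ q.support, x ∈ H.verts),
      ((torso G W).induce {x : W | (x : V) ∈ H.verts}).Reachable
        ⟨⟨u, hu⟩, hsup u q.start_mem_support⟩ ⟨⟨w, hw⟩, hsup w q.end_mem_support⟩ := by
  intro n
  induction n with
  | zero =>
    intro u w hu hw q hlen hsup
    have : q.Nil := SimpleGraph.Walk.nil_iff_length_eq.2 (Nat.le_zero.1 hlen)
    obtain rfl := this.eq
    rfl
  | succ n ih =>
    intro u w hu hw q hlen hsup
    by_cases hx : ∃ x ∈ q.support, x ∈ W ∧ x ≠ u ∧ x ≠ w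
    · obtain ⟨x, hxs, hxW, hxu, hxw⟩ := hx
      have hspec := q.take_spec hxs
      have hlen2 := congr_arg SimpleGraph.Walk.length hspec
      rw [SimpleGraph.Walk.length_append] at hlen2
      set q1 := q.takeUntil x hxs with hq1
      set q2 := q.dropUntil x hxs with hq2
      have h1pos : 0 < q1.length := by
        rcases Nat.eq_zero_or_pos q1.length with h | h
        · exact absurd ((SimpleGraph.Walk.nil_iff_length_eq.2 h).eq) hxu.symm
        · exact h
      have h2pos : 0 < q2.length := by
        rcases Nat.eq_zero_or_pos q2.length with h | h
        · exact absurd ((SimpleGraph.Walk.nil_iff_length_eq.2 h).eq) hxw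
        · exact h
      have hs1 : ∀ y ∈ q1.support, y ∈ H.verts :=
        fun y hy => hsup y (q.support_takeUntil_subset hxs hy)
      have hs2 : ∀ y ∈ q2.support, y ∈ H.verts :=
        fun y hy => hsup y (q.support_dropUntil_subset hxs hy)
      have hl1 : q1.length ≤ n := by omega
      have hl2 : q2.length ≤ n := by omega
      have r1 := ih u x hu hxW q1 hl1 hs1
      have r2 := ih x w hxW hw q2 hl2 hs2
      exact r1.trans r2
    · push_neg at hx
      by_cases huw : u = w
      · subst huw; rfl
      · apply SimpleGraph.Adj.reachable
        refine ⟨hu, hw, huw, q, ?_⟩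
        intro y hy hyW
        by_contra hcon
        push_neg at hcon
        exact hcon.2 (hx y hy hyW hcon.1)

/-- if `H` is a nonempty connected subgraph of `G` meeting `W ⊆ V(G)`, then
the subgraph of `torso_G(W)` induced by `V(H) ∩ W` is connected. -/
theorem torso_projection_connected {V : Type} [Fintype V] (G : SimpleGraph V) (W : Set V)
    (H : G.Subgraph) (hH : H.Connected) (hmeet : (H.verts ∩ W).Nonempty) :
    ((torso G W).induce {x : W | (x : V) ∈ H.verts}).Connected := by
  classical
  obtain ⟨v, hvH, hvW⟩ := hmeet
  rw [SimpleGraph.connected_iff]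
  refine ⟨?_, ⟨⟨⟨v, hvW⟩, hvH⟩⟩⟩
  rintro ⟨⟨a, haW⟩, haH⟩ ⟨⟨b, hbW⟩, hbH⟩
  obtain ⟨p⟩ := hH.preconnected ⟨a, haH⟩ ⟨b, hbH⟩
  have hsup : ∀ x ∈ (p.map H.hom).support, x ∈ H.verts := by
    intro x hx
    rw [SimpleGraph.Walk.support_map, List.mem_map] at hx
    obtain ⟨y, _, rfl⟩ := hx
    exact y.2
  exact torso_reach_aux G W H (p.map H.hom).length a b haW hbW (p.map H.hom) le_rfl hsup
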